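/- arXiv:1706.05949 — 5 statements merged into one kernel-verified Lean document; each statement's English description precedes it below -/
import Mathlib

section
/- For λ > 0, the system s = (1+λt²)/(1+λt²+λt), t = (1+λs²)/(1+λs²+λs) with s, t ∈ (0,1) has a unique solution, and this solution satisfies s = t. -/
/-- The I₃ system has a unique solution in (0,1)², which is diagonal. -/
theorem I3_unique_solution (lam : ℝ) (hlam : 0 < lam) :
    (∃! p : ℝ × ℝ, p.1 ∈ Set.Ioo (0 : ℝ) 1 ∧ p.2 ∈ Set.Ioo (0 : ℝ) 1 ∧
      p.1 = (1 + lam * p.2 ^ 2) / (1 + lam * p.2 ^ 2 + lam * p.2) ∧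
      p.2 = (1 + lam * p.1 ^ 2) / (1 + lam * p.1 ^ 2 + lam * p.1)) ∧
    (∀ p : ℝ × ℝ, p.1 ∈ Set.Ioo (0 : ℝ) 1 → p.2 ∈ Set.Ioo (0 : ℝ) 1 →
      p.1 = (1 + lam * p.2 ^ 2) / (1 + lam * p.2 ^ 2 + lam * p.2) →
      p.2 = (1 + lam * p.1 ^ 2) / (1 + lam * p.1 ^ 2 + lam * p.1) →
      p.1 = p.2) := by
  -- positivity of denominators
  have hden : ∀ t : ℝ, 0 < t → 0 < 1 + lam * t ^ 2 + lam * t := by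
    intro t ht; positivity
  -- clear denominators
  have hclear : ∀ s t : ℝ, 0 < t →
      s = (1 + lam * t ^ 2) / (1 + lam * t ^ 2 + lam * t) →
      s * (1 + lam * t ^ 2 + lam * t) = 1 + lam * t ^ 2 := by
    intro s t ht hs
    field_simp at hs
    linarith [hs]
  -- diagonal lemma
  have diag : ∀ s t : ℝ, s ∈ Set.Ioo (0:ℝ) 1 → t ∈ Set.Ioo (0:ℝ) 1 →
      s = (1 + lam * t ^ 2) / (1 + lam * t ^ 2 + lam * t) →
      t = (1 + lam * s ^ 2) / (1 + lam * s ^ 2 + lam * s) → s = t := by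
    intro s t hs ht e1 e2
    obtain ⟨hs0, hs1⟩ := hs
    obtain ⟨ht0, ht1⟩ := ht
    have c1 := hclear s t ht0 e1
    have c2 := hclear t s hs0 e2
    have key : (s - t) * (1 + lam * (s + t) - lam * s * t) = 0 := by
      linear_combination c1 - c2
    have hpos : 0 < 1 + lam * (s + t) - lam * s * t := by nlinarith
    have := mul_eq_zero.mp key
    rcases this with h | h
    · linarith
    · linarith
  -- cubic root from equation
  have cubic : ∀ t : ℝ, 0 < t →
      t = (1 + lam * t ^ 2) / (1 + lam * t ^ 2 + lam * t) →
      lam * t ^ 3 + t - 1 = 0 := by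
    intro t ht h
    have := hclear t t ht h
    nlinarith [this]
  -- existence of a root of the cubic in (0,1)
  obtain ⟨t0, ht0mem, ht0⟩ : ∃ t0 ∈ Set.Ioo (0:ℝ) 1, lam * t0 ^ 3 + t0 - 1 = 0 := by
    have hcont : ContinuousOn (fun t : ℝ => lam * t ^ 3 + t - 1) (Set.Icc 0 1) := by
      fun_prop
    have hsub := intermediate_value_Ioo (le_of_lt one_pos) hcont
    have h0 : (0:ℝ) ∈ Set.Ioo (lam * (0:ℝ) ^ 3 + 0 - 1) (lam * (1:ℝ) ^ 3 + 1 - 1) := by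
      constructor <;> simp <;> nlinarith
    obtain ⟨t0, ht0mem, ht0⟩ := hsub h0
    exact ⟨t0, ht0mem, ht0⟩
  obtain ⟨ht00, ht01⟩ := ht0mem
  have hfix : t0 = (1 + lam * t0 ^ 2) / (1 + lam * t0 ^ 2 + lam * t0) := by
    have hd := hden t0 ht00
    field_simp
    nlinarith [ht0]
  constructor
  · refine ⟨(t0, t0), ⟨⟨ht00, ht01⟩, ⟨ht00, ht01⟩, hfix, hfix⟩, ?_⟩
    rintro ⟨s, t⟩ ⟨hs, ht, e1, e2⟩
    have hst : s = t := diag s t hs ht e1 e2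
    subst hst
    have hc := cubic s hs.1 e2
    have key : (s - t0) * (lam * (s ^ 2 + s * t0 + t0 ^ 2) + 1) = 0 := by
      linear_combination hc - ht0
    have hpos : 0 < lam * (s ^ 2 + s * t0 + t0 ^ 2) + 1 := by nlinarith [mul_pos hs.1 ht00, sq_nonneg s, sq_nonneg t0, mul_pos hlam (mul_pos hs.1 ht00)]
    have : s = t0 := by
      rcases mul_eq_zero.mp key with h | h
      · linarith
      · linarith
    simp [this]
  · intro p hp1 hp2 e1 e2
    exact diag p.1 p.2 hp1 hp2 e1 e2
end

section
/- For integer k ≥ 2, λ > 0, and x, y ∈ (0,1): if λx^k + λxy^k + x - λy^k = 1 and λy^k + λyx^k + y - λx^k = 1, then x = y. -/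
/-- Solutions of the I₄ system in (0,1)² are diagonal. -/
theorem I4_diagonal (k : ℕ) (hk : 2 ≤ k) (lam x y : ℝ) (hlam : 0 < lam)
    (hx : x ∈ Set.Ioo (0 : ℝ) 1) (hy : y ∈ Set.Ioo (0 : ℝ) 1)
    (h1 : lam * x ^ k + lam * x * y ^ k + x - lam * y ^ k = 1)
    (h2 : lam * y ^ k + lam * y * x ^ k + y - lam * x ^ k = 1) :
    x = y := by
  obtain ⟨hx0, hx1⟩ := hx
  obtain ⟨hy0, hy1⟩ := hy
  rcases lt_trichotomy x y with h | h | h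
  · exfalso
    have hp : x ^ k < y ^ k := pow_lt_pow_left₀ h hx0.le (by omega)
    nlinarith [mul_pos (mul_pos hlam (sub_pos.mpr hp)) (sub_pos.mpr hx1),
      mul_pos (mul_pos hlam (pow_pos hx0 k)) (sub_pos.mpr h),
      mul_pos hlam (sub_pos.mpr hp)]
  · exact h
  · exfalso
    have hp : y ^ k < x ^ k := pow_lt_pow_left₀ h hy0.le (by omega)
    nlinarith [mul_pos (mul_pos hlam (sub_pos.mpr hp)) (sub_pos.mpr hy1),
      mul_pos (mul_pos hlam (pow_pos hy0 k)) (sub_pos.mpr h),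
      mul_pos hlam (sub_pos.mpr hp)]
end

section
/- For integer k ≥ 2 and λ > 0, the system λx^k + λxy^k + x - λy^k = 1, λy^k + λyx^k + y - λx^k = 1 has exactly one solution (x,y) with x, y ∈ (0,1), and it satisfies x = y. -/
lemma I4_key (k : ℕ) (hk : 2 ≤ k) (lam : ℝ) (hlam : 0 < lam) {x y : ℝ}
    (hx : x ∈ Set.Ioo (0:ℝ) 1) (hy : y ∈ Set.Ioo (0:ℝ) 1) (hxy : y < x)
    (e1 : lam * x ^ k + lam * x * y ^ k + x - lam * y ^ k = 1)
    (e2 : lam * y ^ k + lam * y * x ^ k + y - lam * x ^ k = 1) : False := by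
  have hk0 : k ≠ 0 := by omega
  have h1 : y ^ k < x ^ k := pow_lt_pow_left₀ hxy hy.1.le hk0
  have h2 : (0:ℝ) < 2 - y := by linarith [hy.2]
  have h3 : (0:ℝ) < y ^ k := pow_pos hy.1 k
  have hA : 0 < lam * ((x ^ k - y ^ k) * (2 - y)) :=
    mul_pos hlam (mul_pos (by linarith) h2)
  have hB : 0 < lam * (y ^ k * (x - y)) :=
    mul_pos hlam (mul_pos h3 (by linarith))
  nlinarith [e1, e2, hA, hB, hxy]

lemma I4_diag (k : ℕ) (hk : 2 ≤ k) (lam : ℝ) (hlam : 0 < lam) {x y : ℝ}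
    (hx : x ∈ Set.Ioo (0:ℝ) 1) (hy : y ∈ Set.Ioo (0:ℝ) 1)
    (e1 : lam * x ^ k + lam * x * y ^ k + x - lam * y ^ k = 1)
    (e2 : lam * y ^ k + lam * y * x ^ k + y - lam * x ^ k = 1) : x = y := by
  rcases lt_trichotomy x y with h | h | h
  · exact absurd (I4_key k hk lam hlam hy hx h e2 e1) (fun f => f)
  · exact h
  · exact absurd (I4_key k hk lam hlam hx hy h e1 e2) (fun f => f)

/-- The I₄ system has a unique solution in (0,1)², and it is diagonal. -/
theorem I4_unique_solution (k : ℕ) (hk : 2 ≤ k) (lam : ℝ) (hlam : 0 < lam) :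
    (∃! p : ℝ × ℝ, p.1 ∈ Set.Ioo (0 : ℝ) 1 ∧ p.2 ∈ Set.Ioo (0 : ℝ) 1 ∧
      lam * p.1 ^ k + lam * p.1 * p.2 ^ k + p.1 - lam * p.2 ^ k = 1 ∧
      lam * p.2 ^ k + lam * p.2 * p.1 ^ k + p.2 - lam * p.1 ^ k = 1) ∧
    (∀ p : ℝ × ℝ, p.1 ∈ Set.Ioo (0 : ℝ) 1 → p.2 ∈ Set.Ioo (0 : ℝ) 1 →
      lam * p.1 ^ k + lam * p.1 * p.2 ^ k + p.1 - lam * p.2 ^ k = 1 →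
      lam * p.2 ^ k + lam * p.2 * p.1 ^ k + p.2 - lam * p.1 ^ k = 1 →
      p.1 = p.2) := by
  set g : ℝ → ℝ := fun x => lam * x ^ (k + 1) + x with hg
  -- uniqueness of root of g on [0,1]
  have guniq : ∀ a b : ℝ, a ∈ Set.Ioo (0:ℝ) 1 → b ∈ Set.Ioo (0:ℝ) 1 →
      g a = 1 → g b = 1 → a = b := by
    intro a b ha hb h1 h2
    rcases lt_trichotomy a b with h | h | h
    · have := pow_lt_pow_left₀ h ha.1.le (Nat.succ_ne_zero k)
      have : lam * a ^ (k+1) < lam * b ^ (k+1) := by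
        exact (mul_lt_mul_iff_right₀ hlam).mpr this
      simp only [hg] at h1 h2
      linarith
    · exact h
    · have := pow_lt_pow_left₀ h hb.1.le (Nat.succ_ne_zero k)
      have : lam * b ^ (k+1) < lam * a ^ (k+1) := (mul_lt_mul_iff_right₀ hlam).mpr this
      simp only [hg] at h1 h2
      linarith
  -- existence of a root via IVT
  have hcont : ContinuousOn g (Set.Icc (0:ℝ) 1) := by
    apply Continuous.continuousOn; simp only [hg]; continuity
  have h01 : (1:ℝ) ∈ Set.Ioo (g 0) (g 1) := by
    simp only [hg]
    constructor <;> simp <;> nlinarith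
  obtain ⟨x0, hx0, hgx0⟩ := intermediate_value_Ioo (by norm_num : (0:ℝ) ≤ 1) hcont h01
  constructor
  · refine ⟨(x0, x0), ⟨hx0, hx0, ?_, ?_⟩, ?_⟩
    · simp only [hg] at hgx0; ring_nf; ring_nf at hgx0; linarith
    · simp only [hg] at hgx0; ring_nf; ring_nf at hgx0; linarith
    · rintro ⟨a, b⟩ ⟨ha, hb, e1, e2⟩
      have hab : a = b := I4_diag k hk lam hlam ha hb e1 e2
      subst hab
      have hga : g a = 1 := by simp only [hg]; ring_nf; ring_nf at e1; linarith
      have := guniq a x0 ha hx0 hga hgx0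
      simp [this]
  · rintro ⟨a, b⟩ ha hb e1 e2
    exact I4_diag k hk lam hlam ha hb e1 e2
end

section
/- For λ > 0 and s, t ∈ (0,1) with s ≠ t, if s = (1+λs²)/(1+λs²+λt) and t = (1+λt²)/(1+λt²+λs), then λ·t·(1-t) = 1 (i.e., λ = φ₃(t)). -/
/-- Off-diagonal solutions of the I₂ system satisfy λ·t·(1-t) = 1. -/
theorem I2_offdiag_phi3 (lam s t : ℝ) (hlam : 0 < lam)
    (hs : s ∈ Set.Ioo (0 : ℝ) 1) (ht : t ∈ Set.Ioo (0 : ℝ) 1) (hst : s ≠ t)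
    (h1 : s = (1 + lam * s ^ 2) / (1 + lam * s ^ 2 + lam * t))
    (h2 : t = (1 + lam * t ^ 2) / (1 + lam * t ^ 2 + lam * s)) :
    lam * (t * (1 - t)) = 1 := by
  obtain ⟨hs0, hs1⟩ := hs
  obtain ⟨ht0, ht1⟩ := ht
  have hd1 : (1 + lam * s ^ 2 + lam * t) ≠ 0 := by positivity
  have hd2 : (1 + lam * t ^ 2 + lam * s) ≠ 0 := by positivity
  rw [eq_div_iff hd1] at h1
  rw [eq_div_iff hd2] at h2
  have hstne : s - t ≠ 0 := sub_ne_zero.mpr hst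
  have hE : lam * (s + t - s ^ 2 - s * t - t ^ 2) = 1 := by
    have h : (s - t) * (lam * (s + t - s ^ 2 - s * t - t ^ 2) - 1) = 0 := by
      linear_combination h2 - h1
    rcases mul_eq_zero.mp h with h | h
    · exact absurd h hstne
    · linarith
  have hf : (s + t - 1) * (s + t - s * t) = 0 := by
    linear_combination (s + t - s ^ 2 - s * t - t ^ 2) * h1 +
      (s ^ 2 - s ^ 3 - s * t) * hE
  have hpos : s + t - s * t ≠ 0 := by nlinarith
  have h01 : s + t = 1 := by
    rcases mul_eq_zero.mp hf with h | h
    · linarith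
    · exact absurd h hpos
  linear_combination hE + lam * s * h01
end

section
/- For λ > 4, letting t₁ < t₂ be the two solutions in (0,1) of λ·t·(1-t) = 1, the pair (s,t) = (t₂,t₁) satisfies s = (1+λs²)/(1+λs²+λt) and t = (1+λt²)/(1+λt²+λs). -/
/-- For λ > 4, the pair (t₂, t₁) of roots of λt(1-t) = 1 solves the I₂ system. -/
theorem I2_offdiag_solution (lam : ℝ) (hlam : 4 < lam) :
    let t₁ : ℝ := (1 - Real.sqrt (1 - 4 / lam)) / 2
    let t₂ : ℝ := (1 + Real.sqrt (1 - 4 / lam)) / 2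
    t₂ = (1 + lam * t₂ ^ 2) / (1 + lam * t₂ ^ 2 + lam * t₁) ∧
    t₁ = (1 + lam * t₁ ^ 2) / (1 + lam * t₁ ^ 2 + lam * t₂) := by
  intro t₁ t₂
  have hlam0 : (0:ℝ) < lam := by linarith
  have h4 : (0:ℝ) ≤ 1 - 4 / lam := by
    rw [sub_nonneg, div_le_one hlam0]; linarith
  set s := Real.sqrt (1 - 4 / lam) with hs
  have hs0 : 0 ≤ s := Real.sqrt_nonneg _
  have hs2 : s ^ 2 = 1 - 4 / lam := Real.sq_sqrt h4
  have hs1 : s < 1 := by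
    nlinarith [div_pos (by norm_num : (0:ℝ) < 4) hlam0]
  have ht1 : 0 < t₁ := by simp only [t₁]; linarith
  have ht2 : 0 < t₂ := by simp only [t₂]; linarith
  have hd1 : 0 < 1 + lam * t₂ ^ 2 + lam * t₁ := by positivity
  have hd2 : 0 < 1 + lam * t₁ ^ 2 + lam * t₂ := by positivity
  have hslam : s ^ 2 * lam = lam - 4 := by
    field_simp at hs2; linarith
  constructor
  · rw [eq_div_iff (ne_of_gt hd1)]
    show (1 + s) / 2 * (1 + lam * ((1 + s) / 2) ^ 2 + lam * ((1 - s) / 2)) =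
      1 + lam * ((1 + s) / 2) ^ 2
    linear_combination ((s - 1) / 8) * hslam
  · rw [eq_div_iff (ne_of_gt hd2)]
    show (1 - s) / 2 * (1 + lam * ((1 - s) / 2) ^ 2 + lam * ((1 + s) / 2)) =
      1 + lam * ((1 - s) / 2) ^ 2
    linear_combination (-(s + 1) / 8) * hslam
end
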